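/- arXiv:1912.07761 — 2 statements merged into one kernel-verified Lean document; each statement's English description precedes it below -/
import Mathlib

section
/- For all vectors x, y in ℝ^p with y ≠ 0, the inequality ‖x‖₂ ≤ ‖y‖₂ + ⟨y, x − y⟩/‖y‖₂ + ‖x − y‖₂²/(2‖y‖₂) holds. -/
open scoped InnerProductSpace

theorem stmt0 (p : ℕ) (x y : EuclideanSpace ℝ (Fin p)) (hy : y ≠ 0) :
    ‖x‖ ≤ ‖y‖ + ⟪y, x - y⟫_ℝ / ‖y‖ + ‖x - y‖ ^ 2 / (2 * ‖y‖) := by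
  have hb : (0:ℝ) < ‖y‖ := norm_pos_iff.mpr hy
  have h1 : ‖x - y‖ ^ 2 = ‖x‖ ^ 2 - 2 * ⟪x, y⟫_ℝ + ‖y‖ ^ 2 := norm_sub_sq_real x y
  have h2 : ⟪y, x - y⟫_ℝ = ⟪x, y⟫_ℝ - ‖y‖ ^ 2 := by
    rw [inner_sub_right, real_inner_self_eq_norm_sq, real_inner_comm]
  rw [h1, h2, ← sub_nonneg]
  have key : ‖y‖ + (⟪x, y⟫_ℝ - ‖y‖ ^ 2) / ‖y‖ + (‖x‖ ^ 2 - 2 * ⟪x, y⟫_ℝ + ‖y‖ ^ 2) / (2 * ‖y‖) - ‖x‖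
      = (‖x‖ - ‖y‖) ^ 2 / (2 * ‖y‖) := by
    field_simp
    ring
  rw [key]
  positivity
end

section
/- Let a, b, z ∈ ℝ^p, λ₁, λ₂ ≥ 0, w₁, w₂ > 0, L > 0, and suppose a ≠ b. Then the point a minimizes g(β) = λ₁‖β‖₁ + λ₂w₁‖β − a‖₂ + λ₂w₂‖β − b‖₂ + (L/2)‖β − z‖₂² if and only if there exists u ∈ ∂‖·‖₁(a) such that ‖L(a − z) + λ₁u + λ₂w₂(a − b)/‖a − b‖₂‖₂ ≤ λ₂w₁. -/
open RealInnerProductSpace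

private lemma sgn_mul_self (t : ℝ) : Real.sign t * t = |t| := by
  rcases lt_trichotomy t 0 with h|h|h
  · rw [Real.sign_of_neg h, abs_of_neg h]; ring
  · simp [h]
  · rw [Real.sign_of_pos h, abs_of_pos h]; ring

private lemma sgn_mul_abs (t : ℝ) : Real.sign t * |t| = t := by
  rcases lt_trichotomy t 0 with h|h|h
  · rw [Real.sign_of_neg h, abs_of_neg h]; ring
  · simp [h]
  · rw [Real.sign_of_pos h, abs_of_pos h]; ring

private lemma abs_sgn_le (t : ℝ) : |Real.sign t| ≤ 1 := by
  rcases lt_trichotomy t 0 with h|h|h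
  · simp [Real.sign_of_neg h]
  · simp [h]
  · simp [Real.sign_of_pos h]

private lemma lemA {x y u : ℝ} (h1 : x ≠ 0 → u = Real.sign x) (h2 : x = 0 → |u| ≤ 1) :
    |x| + u * (y - x) ≤ |y| := by
  rcases eq_or_ne x 0 with hx|hx
  · subst hx
    simp only [abs_zero, zero_add, sub_zero]
    calc u * y ≤ |u * y| := le_abs_self _
    _ = |u| * |y| := abs_mul _ _
    _ ≤ 1 * |y| := by apply mul_le_mul_of_nonneg_right (h2 rfl) (abs_nonneg _)
    _ = |y| := one_mul _
  · rw [h1 hx]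
    have h3 := sgn_mul_self x
    have : Real.sign x * y ≤ |y| := by
      calc Real.sign x * y ≤ |Real.sign x * y| := le_abs_self _
      _ = |Real.sign x| * |y| := abs_mul _ _
      _ ≤ 1 * |y| := mul_le_mul_of_nonneg_right (abs_sgn_le x) (abs_nonneg _)
      _ = |y| := one_mul _
    nlinarith [this]

variable {F : Type*} [NormedAddCommGroup F] [InnerProductSpace ℝ F]

private lemma lemB {x : F} (hx : x ≠ 0) (h : F) : ‖x‖ + ⟪x, h⟫ / ‖x‖ ≤ ‖x + h‖ := by
  have hn : (0:ℝ) < ‖x‖ := norm_pos_iff.mpr hx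
  have h1 : ⟪x, x + h⟫ ≤ ‖x‖ * ‖x + h‖ := real_inner_le_norm x _
  rw [inner_add_right, real_inner_self_eq_norm_sq] at h1
  have e : ⟪x,h⟫/‖x‖*‖x‖ = ⟪x,h⟫ := div_mul_cancel₀ _ hn.ne'
  have h2 : (‖x‖ + ⟪x,h⟫/‖x‖) * ‖x‖ ≤ ‖x+h‖ * ‖x‖ := by nlinarith
  exact le_of_mul_le_mul_right h2 hn
private lemma lemB' {x : F} (hx : x ≠ 0) (h : F) :
    ‖x + h‖ ≤ ‖x‖ + ⟪x, h⟫ / ‖x‖ + ‖h‖^2 / (2 * ‖x‖) := by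
  have hn : (0:ℝ) < ‖x‖ := norm_pos_iff.mpr hx
  have hcs : -(‖x‖ * ‖h‖) ≤ ⟪x, h⟫ := neg_le_of_abs_le (abs_real_inner_le_norm x h)
  have hR : 0 ≤ ‖x‖ + ⟪x, h⟫ / ‖x‖ + ‖h‖^2 / (2 * ‖x‖) := by
    have e1 : ⟪x, h⟫ / ‖x‖ ≥ -‖h‖ := by
      rw [ge_iff_le, le_div_iff₀ hn]; nlinarith
    have e3 : ‖h‖^2 / (2*‖x‖) * (2*‖x‖) = ‖h‖^2 := div_mul_cancel₀ _ (by positivity)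
    nlinarith [sq_nonneg (‖x‖ - ‖h‖), mul_pos hn hn, hn, norm_nonneg h]
  have hsq : ‖x + h‖^2 ≤ (‖x‖ + ⟪x, h⟫ / ‖x‖ + ‖h‖^2 / (2 * ‖x‖))^2 := by
    rw [norm_add_sq_real]
    have e1 : ⟪x,h⟫ / ‖x‖ * ‖x‖ = ⟪x,h⟫ := div_mul_cancel₀ _ hn.ne'
    have e2 : ‖h‖^2 / (2*‖x‖) * ‖x‖ = ‖h‖^2/2 := by field_simp
    nlinarith [sq_nonneg (⟪x,h⟫ / ‖x‖ + ‖h‖^2 / (2*‖x‖)), sq_nonneg (⟪x,h⟫ + ‖h‖^2/2)]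
  calc ‖x + h‖ = Real.sqrt (‖x + h‖^2) := (Real.sqrt_sq (norm_nonneg _)).symm
  _ ≤ Real.sqrt ((‖x‖ + ⟪x, h⟫ / ‖x‖ + ‖h‖^2 / (2 * ‖x‖))^2) := Real.sqrt_le_sqrt hsq
  _ = _ := Real.sqrt_sq hR

private lemma scalar_key {lam1 aa r c d : ℝ} (h1 : 0 ≤ lam1)
    (hc : c = r + lam1 * Real.sign aa)
    (hd : d = if aa = 0 then Real.sign c * max (|c| - lam1) 0 else c) :
    lam1 * (if aa = 0 then |(-d)| else Real.sign aa * (-d)) + r * (-d) = -d^2 := by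
  rcases eq_or_ne aa 0 with h0|h0
  · rw [if_pos h0] at hd ⊢
    have hcr : c = r := by rw [hc, h0, Real.sign_zero]; ring
    rcases le_or_gt (|c| - lam1) 0 with hm|hm
    · rw [max_eq_right hm, mul_zero] at hd
      rw [hd]; simp
    · have hmax : max (|c| - lam1) 0 = |c| - lam1 := max_eq_left hm.le
      have hcne : c ≠ 0 := by
        intro hh; rw [hh, abs_zero] at hm; linarith
      rw [hmax] at hd
      rcases Real.sign_apply_eq_of_ne_zero c hcne with hs|hs
      · have habs : |c| = -c := by
          have := sgn_mul_abs c; rw [hs] at this; linarith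
        rw [hs, habs] at hd
        have hdnp : d ≤ 0 := by rw [hd]; rw [habs] at hm; linarith
        rw [abs_neg, abs_of_nonpos hdnp, hd, ← hcr]; ring
      · have habs : |c| = c := by
          have := sgn_mul_abs c; rw [hs] at this; linarith
        rw [hs, habs, one_mul] at hd
        have hdnn : 0 ≤ d := by rw [hd]; rw [habs] at hm; linarith
        rw [abs_neg, abs_of_nonneg hdnn, hd, ← hcr]; ring
  · rw [if_neg h0] at hd ⊢
    have hr : r = c - lam1 * Real.sign aa := by rw [hc]; ring
    rw [hd, hr]; ring

private lemma scalar_u {lam1 c d : ℝ} (h1 : 0 ≤ lam1)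
    (hd : d = Real.sign c * max (|c| - lam1) 0) : |d - c| ≤ lam1 := by
  rcases le_or_gt (|c| - lam1) 0 with hm|hm
  · rw [max_eq_right hm, mul_zero] at hd
    rw [hd, zero_sub, abs_neg]; linarith
  · have hmax : max (|c| - lam1) 0 = |c| - lam1 := max_eq_left hm.le
    have hcne : c ≠ 0 := by intro hh; rw [hh, abs_zero] at hm; linarith
    rw [hmax] at hd
    rcases Real.sign_apply_eq_of_ne_zero c hcne with hs|hs
    · have habs : |c| = -c := by have := sgn_mul_abs c; rw [hs] at this; linarith
      rw [hs, habs] at hd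
      have : d - c = lam1 := by rw [hd]; ring
      rw [this, abs_of_nonneg h1]
    · have habs : |c| = c := by have := sgn_mul_abs c; rw [hs] at this; linarith
      rw [hs, habs, one_mul] at hd
      have : d - c = -lam1 := by rw [hd]; ring
      rw [this, abs_neg, abs_of_nonneg h1]

set_option maxHeartbeats 2000000 in
open RealInnerProductSpace in
theorem stmt8 (p : ℕ) (L lam1 lam2 w1 w2 : ℝ) (hL : 0 < L) (h1 : 0 ≤ lam1)
    (h2 : 0 ≤ lam2) (hw1 : 0 < w1) (hw2 : 0 < w2)
    (a b z : EuclideanSpace ℝ (Fin p)) (hab : a ≠ b) :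
    (∀ β : EuclideanSpace ℝ (Fin p),
        lam1 * (∑ i, |a i|) + lam2 * w1 * ‖a - a‖ + lam2 * w2 * ‖a - b‖ +
            (L / 2) * ‖a - z‖ ^ 2 ≤
          lam1 * (∑ i, |β i|) + lam2 * w1 * ‖β - a‖ + lam2 * w2 * ‖β - b‖ +
            (L / 2) * ‖β - z‖ ^ 2) ↔
      ∃ u : EuclideanSpace ℝ (Fin p),
        (∀ i, (a i ≠ 0 → u i = Real.sign (a i)) ∧ (a i = 0 → |u i| ≤ 1)) ∧
        ‖L • (a - z) + lam1 • u + (lam2 * w2 / ‖a - b‖) • (a - b)‖ ≤ lam2 * w1 := by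
  have hxab : a - b ≠ 0 := sub_ne_zero.mpr hab
  have hn : (0:ℝ) < ‖a - b‖ := norm_pos_iff.mpr hxab
  have inner_sum : ∀ x y : EuclideanSpace ℝ (Fin p), ⟪x, y⟫ = ∑ i, x i * y i := by
    intro x y; simp [PiLp.inner_apply, RCLike.inner_apply, conj_trivial]
    exact Finset.sum_congr rfl fun i _ => mul_comm _ _
  have normsq : ∀ x : EuclideanSpace ℝ (Fin p), ‖x‖^2 = ∑ i, (x i)^2 := by
    intro x
    rw [EuclideanSpace.norm_eq, Real.sq_sqrt (by positivity)]
    simp [Real.norm_eq_abs, sq_abs]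
  constructor
  · intro hmin
    -- directional derivative condition
    have key : ∀ h : EuclideanSpace ℝ (Fin p),
        0 ≤ lam1 * (∑ i, if a i = 0 then |h i| else Real.sign (a i) * h i)
            + lam2 * w1 * ‖h‖ + (lam2 * w2 / ‖a - b‖) * ⟪a - b, h⟫
            + L * ⟪a - z, h⟫ := by
      intro h
      by_contra hcon
      push_neg at hcon
      set Φ := ∑ i, if a i = 0 then |h i| else Real.sign (a i) * h i with hΦ
      set D := lam1 * Φ + lam2 * w1 * ‖h‖ + (lam2 * w2 / ‖a - b‖) * ⟪a - b, h⟫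
          + L * ⟪a - z, h⟫ with hD
      set C := L/2 * ‖h‖^2 + lam2 * w2 * ‖h‖^2 / (2 * ‖a - b‖) with hC
      have hC0 : 0 ≤ C := by rw [hC]; positivity
      obtain ⟨t1, ht1, ht1b⟩ : ∃ t1 : ℝ, 0 < t1 ∧ ∀ i, a i ≠ 0 → t1 * |h i| ≤ |a i| := by
        rcases (Finset.univ.filter fun i => a i ≠ 0).eq_empty_or_nonempty with hS|hS
        · refine ⟨1, one_pos, fun i hi => ?_⟩
          have hmem : i ∈ Finset.univ.filter fun i => a i ≠ 0 :=
            Finset.mem_filter.mpr ⟨Finset.mem_univ i, hi⟩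
          rw [hS] at hmem
          exact absurd hmem (Finset.notMem_empty i)
        · have hinfpos : 0 < (Finset.univ.filter fun i => a i ≠ 0).inf' hS
              fun i => |a i| / (|h i| + 1) := by
            rw [Finset.lt_inf'_iff]
            intro i hi
            have hane : a i ≠ 0 := (Finset.mem_filter.mp hi).2
            have : 0 < |a i| := abs_pos.mpr hane
            positivity
          refine ⟨_, hinfpos, fun i hi => ?_⟩
          have hm := Finset.inf'_le (fun i => |a i| / (|h i| + 1))
            (Finset.mem_filter.mpr ⟨Finset.mem_univ i, hi⟩ :
              i ∈ Finset.univ.filter fun i => a i ≠ 0)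
          have hp2 : (0:ℝ) < |h i| + 1 := by positivity
          have h3 := (le_div_iff₀ hp2).mp hm
          nlinarith [hinfpos.le, abs_nonneg (h i)]
      have hC1 : (0:ℝ) < C + 1 := by linarith
      obtain ⟨t, ht, htt1, htD⟩ : ∃ t : ℝ, 0 < t ∧ t ≤ t1 ∧ D + t * C < 0 := by
        refine ⟨min t1 ((-D)/(C+1)), lt_min ht1 (div_pos (by linarith) hC1),
          min_le_left _ _, ?_⟩
        have h4 : min t1 ((-D)/(C+1)) ≤ (-D)/(C+1) := min_le_right _ _
        have h5 : min t1 ((-D)/(C+1)) * C ≤ ((-D)/(C+1)) * C :=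
          mul_le_mul_of_nonneg_right h4 hC0
        have h6 : ((-D)/(C+1)) * C < -D := by
          rw [div_mul_eq_mul_div, div_lt_iff₀ hC1]
          nlinarith
        have h7 : min t1 ((-D)/(C+1)) * C < -D := lt_of_le_of_lt h5 h6
        linarith [h7]
      have hβ := hmin (a + t • h)
      simp only [sub_self, norm_zero, mul_zero, add_zero] at hβ
      have hsum : ∑ i, |(a + t • h) i| ≤ (∑ i, |a i|) + t * Φ := by
        rw [hΦ, Finset.mul_sum, ← Finset.sum_add_distrib]
        apply Finset.sum_le_sum
        intro i _
        have hco : (a + t • h) i = a i + t * h i := rfl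
        rw [hco]
        rcases eq_or_ne (a i) 0 with h0|h0
        · rw [if_pos h0, h0, abs_zero, zero_add, zero_add, abs_mul, abs_of_pos ht]
        · rw [if_neg h0]
          have hb := ht1b i h0
          have htb : t * |h i| ≤ |a i| :=
            le_trans (mul_le_mul_of_nonneg_right htt1 (abs_nonneg _)) hb
          rcases lt_trichotomy (a i) 0 with hlt|heq|hgt
          · rw [Real.sign_of_neg hlt]
            rw [abs_of_neg hlt] at htb
            have hnp : a i + t * h i ≤ 0 := by
              nlinarith [mul_le_mul_of_nonneg_left (le_abs_self (h i)) ht.le]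
            rw [abs_of_nonpos hnp, abs_of_neg hlt]
            linarith [le_refl (t * h i)]
          · exact absurd heq h0
          · rw [Real.sign_of_pos hgt]
            rw [abs_of_pos hgt] at htb
            have hnn : 0 ≤ a i + t * h i := by
              nlinarith [mul_le_mul_of_nonneg_left (neg_abs_le (h i)) ht.le]
            rw [abs_of_nonneg hnn, abs_of_pos hgt]
            linarith [le_refl (t * h i)]
      have hbb : ‖a + t • h - b‖ ≤ ‖a - b‖ + t * ⟪a - b, h⟫ / ‖a - b‖
          + t^2 * ‖h‖^2 / (2 * ‖a - b‖) := by
        have e : a + t • h - b = (a - b) + t • h := by abel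
        rw [e]
        have hlb := lemB' hxab (t • h)
        rw [real_inner_smul_right, norm_smul, Real.norm_eq_abs, abs_of_pos ht] at hlb
        calc ‖(a - b) + t • h‖ ≤ ‖a-b‖ + t * ⟪a - b, h⟫ / ‖a-b‖ + (t * ‖h‖)^2 / (2 * ‖a-b‖) := hlb
        _ = _ := by ring
      have hba : lam2 * w1 * ‖a + t • h - a‖ = lam2 * w1 * (t * ‖h‖) := by
        have e : a + t • h - a = t • h := by abel
        rw [e, norm_smul, Real.norm_eq_abs, abs_of_pos ht]
      have hbz : (L/2) * ‖a + t • h - z‖^2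
          = (L/2) * ‖a - z‖^2 + t * (L * ⟪a - z, h⟫) + t^2 * (L/2 * ‖h‖^2) := by
        have e : a + t • h - z = (a - z) + t • h := by abel
        rw [e, norm_add_sq_real, real_inner_smul_right, norm_smul, Real.norm_eq_abs,
          abs_of_pos ht]
        ring
      have B1 := mul_le_mul_of_nonneg_left hsum h1
      have B2 := mul_le_mul_of_nonneg_left hbb (mul_nonneg h2 hw2.le)
      have htDt : t * (D + t * C) < 0 := mul_neg_of_pos_of_neg ht htD
      rw [hD, hC] at htDt
      simp only [div_eq_mul_inv, mul_inv] at B2 htDt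
      linarith [hβ, B1, B2, hba, hbz, htDt]
    -- construct u
    set s0 : EuclideanSpace ℝ (Fin p) :=
      (WithLp.equiv 2 (Fin p → ℝ)).symm (fun i => Real.sign (a i)) with hs0
    set c : EuclideanSpace ℝ (Fin p) :=
      L • (a - z) + (lam2 * w2 / ‖a - b‖) • (a - b) + lam1 • s0 with hcdef
    have hci : ∀ i, c i = (L * (a i - z i) + (lam2 * w2 / ‖a - b‖) * (a i - b i))
        + lam1 * Real.sign (a i) := fun i => rfl
    set d : EuclideanSpace ℝ (Fin p) :=
      (WithLp.equiv 2 (Fin p → ℝ)).symm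
        (fun i => if a i = 0 then Real.sign (c i) * max (|c i| - lam1) 0 else c i) with hddef
    have hdi : ∀ i, d i = if a i = 0 then Real.sign (c i) * max (|c i| - lam1) 0 else c i :=
      fun i => rfl
    have hkey := key (-d)
    have hexp : lam1 * (∑ i, if a i = 0 then |(-d) i| else Real.sign (a i) * (-d) i)
        + (lam2 * w2 / ‖a - b‖) * ⟪a - b, -d⟫ + L * ⟪a - z, -d⟫ = -‖d‖^2 := by
      rw [inner_sum, inner_sum, normsq, Finset.mul_sum, Finset.mul_sum, Finset.mul_sum,
        ← Finset.sum_neg_distrib, ← Finset.sum_add_distrib, ← Finset.sum_add_distrib]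
      apply Finset.sum_congr rfl
      intro i _
      have hsub1 : (a - b) i = a i - b i := rfl
      have hsub2 : (a - z) i = a i - z i := rfl
      have hnd : (-d) i = -(d i) := rfl
      rw [hsub1, hsub2, hnd]
      have := scalar_key (lam1 := lam1) (aa := a i)
        (r := L * (a i - z i) + (lam2 * w2 / ‖a - b‖) * (a i - b i))
        (c := c i) (d := d i) h1 (hci i) (hdi i)
      nlinarith [this]
    have hnormd : ‖d‖ ≤ lam2 * w1 := by
      have hkey2 : 0 ≤ -‖d‖^2 + lam2 * w1 * ‖d‖ := by
        rw [norm_neg] at hkey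
        nlinarith [hkey, hexp]
      rcases eq_or_lt_of_le (norm_nonneg d) with hd0|hd0
      · rw [← hd0]; exact mul_nonneg h2 hw1.le
      · nlinarith
    refine ⟨(WithLp.equiv 2 (Fin p → ℝ)).symm
      (fun i => if a i = 0 then (if lam1 = 0 then 0 else (d i - c i) / lam1)
        else Real.sign (a i)), fun i => ⟨?_, ?_⟩, ?_⟩
    · intro hne
      show (if a i = 0 then _ else _) = _
      rw [if_neg hne]
    · intro h0
      show |if a i = 0 then (if lam1 = 0 then 0 else (d i - c i) / lam1)
        else Real.sign (a i)| ≤ 1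
      rw [if_pos h0]
      rcases eq_or_ne lam1 0 with hl0|hl0
      · rw [if_pos hl0]; simp
      · rw [if_neg hl0]
        have hlpos : 0 < lam1 := lt_of_le_of_ne h1 (Ne.symm hl0)
        have hdc : |d i - c i| ≤ lam1 := by
          apply scalar_u h1
          rw [hdi i, if_pos h0]
        rw [abs_div, abs_of_pos hlpos, div_le_one hlpos]
        exact hdc
    · have hveq : L • (a - z) + lam1 • (((WithLp.equiv 2 (Fin p → ℝ)).symm
          (fun i => if a i = 0 then (if lam1 = 0 then 0 else (d i - c i) / lam1)
            else Real.sign (a i))) : EuclideanSpace ℝ (Fin p))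
          + (lam2 * w2 / ‖a - b‖) • (a - b) = d := by
        ext i
        have hlhs : (L • (a - z) + lam1 • (((WithLp.equiv 2 (Fin p → ℝ)).symm
            (fun i => if a i = 0 then (if lam1 = 0 then 0 else (d i - c i) / lam1)
              else Real.sign (a i))) : EuclideanSpace ℝ (Fin p))
            + (lam2 * w2 / ‖a - b‖) • (a - b)) i
            = L * (a i - z i) + lam1 * (if a i = 0 then
              (if lam1 = 0 then 0 else (d i - c i) / lam1) else Real.sign (a i))
              + (lam2 * w2 / ‖a - b‖) * (a i - b i) := rfl
        rw [hlhs]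
        rcases eq_or_ne (a i) 0 with h0|h0
        · rw [if_pos h0]
          have hc0 : c i = (L * (a i - z i) + (lam2 * w2 / ‖a - b‖) * (a i - b i)) := by
            rw [hci i, h0, Real.sign_zero]; ring
          rcases eq_or_ne lam1 0 with hl0|hl0
          · rw [if_pos hl0, hl0]
            have : d i = c i := by
              rw [hdi i, if_pos h0, hl0, sub_zero, max_eq_left (abs_nonneg _), sgn_mul_abs]
            rw [this, hc0]; ring
          · rw [if_neg hl0, mul_div_cancel₀ _ hl0]
            rw [hc0]; ring
        · rw [if_neg h0]
          have : d i = c i := by rw [hdi i, if_neg h0]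
          rw [this, hci i]; ring
      rw [hveq]
      exact hnormd
  · rintro ⟨u, hu, hv⟩ β
    set v := L • (a - z) + lam1 • u + (lam2 * w2 / ‖a - b‖) • (a - b) with hvdef
    have P1 : (∑ i, |a i|) + (∑ i, u i * (β i - a i)) ≤ ∑ i, |β i| := by
      rw [← Finset.sum_add_distrib]
      exact Finset.sum_le_sum fun i _ => lemA (hu i).1 (hu i).2
    have hinner_u : ⟪u, β - a⟫ = ∑ i, u i * (β i - a i) := by
      rw [inner_sum]
      apply Finset.sum_congr rfl
      intro i _
      rfl
    have P2 : ‖a - b‖ + ⟪a - b, β - a⟫ / ‖a - b‖ ≤ ‖β - b‖ := by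
      have hl := lemB hxab (β - a)
      have e : (a - b) + (β - a) = β - b := by abel
      rwa [e] at hl
    have P3 : ‖β - z‖^2 = ‖a - z‖^2 + 2 * ⟪a - z, β - a⟫ + ‖β - a‖^2 := by
      have e : β - z = (a - z) + (β - a) := by abel
      rw [e, norm_add_sq_real]
    have P4 : -⟪v, β - a⟫ ≤ lam2 * w1 * ‖β - a‖ := by
      have c1 : -⟪v, β - a⟫ ≤ ‖v‖ * ‖β - a‖ :=
        le_trans (neg_le_abs _) (abs_real_inner_le_norm v (β - a))
      calc -⟪v, β - a⟫ ≤ ‖v‖ * ‖β - a‖ := c1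
      _ ≤ lam2 * w1 * ‖β - a‖ := mul_le_mul_of_nonneg_right hv (norm_nonneg _)
    have Pexp : ⟪v, β - a⟫ = L * ⟪a - z, β - a⟫ + lam1 * (∑ i, u i * (β i - a i))
        + (lam2 * w2 / ‖a - b‖) * ⟪a - b, β - a⟫ := by
      rw [hvdef, inner_add_left, inner_add_left, real_inner_smul_left,
        real_inner_smul_left, real_inner_smul_left, hinner_u]
    have F1 : lam1 * (∑ i, |a i|) + lam1 * (∑ i, u i * (β i - a i)) ≤ lam1 * ∑ i, |β i| := by
      nlinarith [mul_le_mul_of_nonneg_left P1 h1]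
    have F2 : lam2 * w2 * ‖a - b‖ + (lam2 * w2 / ‖a - b‖) * ⟪a - b, β - a⟫
        ≤ lam2 * w2 * ‖β - b‖ := by
      have hm := mul_le_mul_of_nonneg_left P2 (mul_nonneg h2 hw2.le)
      have e2 : lam2 * w2 * (‖a - b‖ + ⟪a - b, β - a⟫ / ‖a - b‖)
          = lam2 * w2 * ‖a - b‖ + (lam2 * w2 / ‖a - b‖) * ⟪a - b, β - a⟫ := by
        field_simp
      linarith [hm, e2.le, e2.ge]
    have F3 : (L/2) * ‖a - z‖^2 + L * ⟪a - z, β - a⟫ ≤ (L/2) * ‖β - z‖^2 := by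
      nlinarith [P3, sq_nonneg ‖β - a‖, hL]
    rw [Pexp] at P4
    simp only [sub_self, norm_zero, mul_zero, add_zero]
    linarith [F1, F2, F3, P4]
end
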